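/- Let F be an infinite field and let w₁ ∈ F_{d₁}, w₂ ∈ F_{d₂} be nontrivial words. Then the set of λ ∈ F, λ ≠ 0, such that the diagonal matrix diag(λ, λ⁻¹) is a product g₁g₂ with g₁ ∈ w₁(SL₂(F)) and g₂ ∈ w₂(SL₂(F)), is infinite. -/

import Mathlib

/-- The set of `w`-values in the group `G`: the image of the word map `w : G^d → G`. -/
def wordValues {d : ℕ} (w : FreeGroup (Fin d)) (G : Type*) [Group G] : Set G :=
  Set.range fun g : Fin d → G => FreeGroup.lift g w

open Matrix Polynomial

section Aux
variable {F : Type*} [Field F]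




/-- Chain' from absence of bad adjacent decompositions. -/
lemma chain'_of_no_decomp {α : Type*} {R : α → α → Prop} :
    ∀ (L : List α), (∀ (L₁ : List α) (a b : α) (L₂ : List α),
      L = L₁ ++ a :: b :: L₂ → R a b) → L.Chain' R
  | [], _ => List.isChain_nil
  | [_], _ => List.isChain_singleton _
  | (a :: b :: L), h => by
    refine List.isChain_cons_cons.2 ⟨h [] a b L rfl, chain'_of_no_decomp (b :: L) ?_⟩
    intro L₁ x y L₂ hd
    exact h (a :: L₁) x y L₂ (by rw [hd]; rfl)

lemma toWord_chain' {β : Type*} [DecidableEq β] (w : FreeGroup β) :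
    w.toWord.Chain' (fun a b => b ≠ (a.1, !a.2)) := by
  apply chain'_of_no_decomp
  rintro L₁ ⟨xa, ba⟩ ⟨xb, bb⟩ L₂ hd hb
  have hred := w.reduce_toWord
  obtain ⟨rfl, rfl⟩ : xb = xa ∧ bb = !ba := by
    simpa [Prod.ext_iff] using hb
  exact FreeGroup.reduce.not (p := False) (by rw [hred, hd])

/-- The coercion `SL₂ → Matrix` as a monoid hom. -/
def toMat : Matrix.SpecialLinearGroup (Fin 2) F →* Matrix (Fin 2) (Fin 2) F where
  toFun g := ↑g
  map_one' := Matrix.SpecialLinearGroup.coe_one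
  map_mul' := Matrix.SpecialLinearGroup.coe_mul

/-- Conjugation of SL₂ by an invertible matrix (given with explicit two-sided inverse),
as a monoid hom. -/
def conjSL (P Q : Matrix (Fin 2) (Fin 2) F) (hPQ : P * Q = 1) (hQP : Q * P = 1) :
    Matrix.SpecialLinearGroup (Fin 2) F →* Matrix.SpecialLinearGroup (Fin 2) F where
  toFun g := ⟨P * ↑g * Q, by
    have h1 : P.det * Q.det = 1 := by rw [← Matrix.det_mul, hPQ, Matrix.det_one]
    rw [Matrix.det_mul, Matrix.det_mul]
    calc P.det * (↑g : Matrix (Fin 2) (Fin 2) F).det * Q.det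
        = P.det * Q.det * (↑g : Matrix (Fin 2) (Fin 2) F).det := by ring
      _ = 1 := by rw [h1, one_mul, g.prop]⟩
  map_one' := by
    apply Subtype.ext
    show P * ((1 : Matrix.SpecialLinearGroup (Fin 2) F) : Matrix (Fin 2) (Fin 2) F) * Q = _
    rw [Matrix.SpecialLinearGroup.coe_one, mul_one, hPQ]
  map_mul' g h := by
    apply Subtype.ext
    show P * ((g * h : Matrix.SpecialLinearGroup (Fin 2) F) : Matrix (Fin 2) (Fin 2) F) * Q = _
    rw [Matrix.SpecialLinearGroup.coe_mul]
    show _ = (P * (g : Matrix (Fin 2) (Fin 2) F) * Q) * (P * (h : Matrix (Fin 2) (Fin 2) F) * Q)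
    calc P * ((g : Matrix (Fin 2) (Fin 2) F) * (h : Matrix (Fin 2) (Fin 2) F)) * Q = P * ((g : Matrix (Fin 2) (Fin 2) F) * ((Q * P) * ((h : Matrix (Fin 2) (Fin 2) F) * Q))) := by rw [hQP, one_mul]; simp only [mul_assoc]
      _ = (P * (g : Matrix (Fin 2) (Fin 2) F) * Q) * (P * (h : Matrix (Fin 2) (Fin 2) F) * Q) := by simp only [mul_assoc]

/-- A word value, conjugated, is again a word value. -/
lemma conj_mem_wordValues {d : ℕ} (w : FreeGroup (Fin d))
    (u : Matrix.SpecialLinearGroup (Fin 2) F) (hu : u ∈ wordValues w (Matrix.SpecialLinearGroup (Fin 2) F))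
    (P Q : Matrix (Fin 2) (Fin 2) F) (hPQ : P * Q = 1) (hQP : Q * P = 1) :
    ∃ v ∈ wordValues w (Matrix.SpecialLinearGroup (Fin 2) F),
      (v : Matrix (Fin 2) (Fin 2) F) = P * (u : Matrix (Fin 2) (Fin 2) F) * Q := by
  obtain ⟨g, rfl⟩ := hu
  refine ⟨FreeGroup.lift (fun i => conjSL P Q hPQ hQP (g i)) w, ⟨_, rfl⟩, ?_⟩
  have : FreeGroup.lift (fun i => conjSL P Q hPQ hQP (g i)) w
      = (conjSL P Q hPQ hQP) (FreeGroup.lift g w) :=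
    (FreeGroup.lift_unique ((conjSL P Q hPQ hQP).comp (FreeGroup.lift g)) (by simp)).symm
  rw [this]
  rfl

lemma toMat_apply (g : Matrix.SpecialLinearGroup (Fin 2) F) :
    toMat g = (g : Matrix (Fin 2) (Fin 2) F) := rfl


/-- A nonscalar matrix of determinant 1 is conjugate to the companion matrix of its char poly. -/
lemma mul_companion (M : Matrix (Fin 2) (Fin 2) F) (hdet : M.det = 1)
    (hns : M 1 0 ≠ 0 ∨ M 0 1 ≠ 0 ∨ M 0 0 ≠ M 1 1) :
    ∃ P : Matrix (Fin 2) (Fin 2) F, P.det ≠ 0 ∧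
      M * P = P * !![0, -1; 1, M 0 0 + M 1 1] := by
  obtain ⟨p, q, r, s, rfl⟩ : ∃ p q r s, M = !![p, q; r, s] :=
    ⟨_, _, _, _, (Matrix.etaExpand_eq M).symm⟩
  rw [Matrix.det_fin_two_of] at hdet
  simp only [show !![p,q;r,s] 1 0 = r from rfl, show !![p,q;r,s] 0 1 = q from rfl,
    show !![p,q;r,s] 0 0 = p from rfl, show !![p,q;r,s] 1 1 = s from rfl] at hns ⊢
  by_cases hr : r = 0
  · by_cases hq : q = 0
    · have hps : p ≠ s := by
        rcases hns with h | h | h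
        · exact absurd hr h
        · exact absurd hq h
        · exact h
      subst hr; subst hq
      refine ⟨!![1, p; 1, s], by simp [Matrix.det_fin_two_of, sub_ne_zero.2 (Ne.symm hps)], ?_⟩
      ext i j
      fin_cases i <;> fin_cases j <;>
        simp [Matrix.mul_apply, Fin.sum_univ_two] <;>
        first
          | ring1 | linear_combination hdet | linear_combination -hdet
          | linear_combination (-1 - p) * hdet | linear_combination (-1 - s) * hdet
          | linear_combination (1 + p) * hdet | linear_combination (1 + s) * hdet
    · refine ⟨!![0, q; 1, s], by simp [Matrix.det_fin_two_of, hq], ?_⟩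
      ext i j
      fin_cases i <;> fin_cases j <;>
        simp [Matrix.mul_apply, Fin.sum_univ_two] <;>
        first
          | ring1 | linear_combination hdet | linear_combination -hdet
          | linear_combination 2*hdet | linear_combination -2*hdet
  · refine ⟨!![1, p; 0, r], by simp [Matrix.det_fin_two_of, hr], ?_⟩
    ext i j
    fin_cases i <;> fin_cases j <;>
      simp [Matrix.mul_apply, Fin.sum_univ_two] <;>
      first
        | ring1 | linear_combination hdet | linear_combination -hdet
        | linear_combination 2*hdet | linear_combination -2*hdet



section Core
variable {d : ℕ}

/-- Attracting/repelling vectors for the generators. -/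
def Uvec (x y : Fin d → F) : Fin d × Bool → Fin 2 → F :=
  fun ℓ => if ℓ.2 then ![x ℓ.1, 1] else ![y ℓ.1, 1]

def Vvec (x y : Fin d → F) : Fin d × Bool → Fin 2 → F :=
  fun ℓ => if ℓ.2 then ![1, -y ℓ.1] else ![-1, x ℓ.1]

noncomputable def UC (x y : Fin d → F) (ℓ : Fin d × Bool) : Fin 2 → F[X] :=
  fun r => C (Uvec x y ℓ r)

noncomputable def VC (x y : Fin d → F) (ℓ : Fin d × Bool) : Fin 2 → F[X] :=
  fun r => C (Vvec x y ℓ r)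

def Bmat (x y : Fin d → F) (ℓ : Fin d × Bool) : Matrix (Fin 2) (Fin 2) F :=
  vecMulVec (Uvec x y ℓ) (Vvec x y ℓ)

/-- The polynomial matrix attached to a letter. -/
noncomputable def Mp (x y : Fin d → F) (ℓ : Fin d × Bool) : Matrix (Fin 2) (Fin 2) F[X] :=
  (X ^ 2 : F[X]) • (Bmat x y ℓ).map C + (Bmat x y (ℓ.1, !ℓ.2)).map C

lemma vecMulVec_mul_vecMulVec {R : Type*} [CommRing R] (u v u' v' : Fin 2 → R) :
    vecMulVec u v * vecMulVec u' v' = (v ⬝ᵥ u') • vecMulVec u v' := by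
  ext i j
  simp [Matrix.vecMulVec_apply, Matrix.mul_apply, Matrix.smul_apply, dotProduct,
    Fin.sum_univ_two, smul_eq_mul]
  ring

lemma map_C_vecMulVec (x y : Fin d → F) (ℓ ℓ' : Fin d × Bool) :
    (vecMulVec (Uvec x y ℓ) (Vvec x y ℓ')).map (C : F →+* F[X])
      = vecMulVec (UC x y ℓ) (VC x y ℓ') := by
  ext i j
  simp [Matrix.vecMulVec_apply, Matrix.map_apply, UC, VC]

lemma dot_C (x y : Fin d → F) (ℓ ℓ' : Fin d × Bool) :
    VC x y ℓ ⬝ᵥ UC x y ℓ' = C (Vvec x y ℓ ⬝ᵥ Uvec x y ℓ') := by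
  simp [dotProduct, Fin.sum_univ_two, UC, VC]

lemma UC_deg (x y : Fin d → F) (ℓ : Fin d × Bool) (i j : Fin 2) :
    ((vecMulVec (UC x y ℓ) (VC x y ℓ')) i j).degree ≤ 0 := by
  rw [Matrix.vecMulVec_apply, UC, VC, ← Polynomial.C_mul]
  exact Polynomial.degree_C_le

/-- degree bound for entries of a product of 2×2 polynomial matrices. -/
lemma deg_mul_le (A B : Matrix (Fin 2) (Fin 2) F[X]) (a b : WithBot ℕ)
    (hA : ∀ i j, (A i j).degree ≤ a) (hB : ∀ i j, (B i j).degree ≤ b) :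
    ∀ i j, ((A * B) i j).degree ≤ a + b := by
  intro i j
  rw [Matrix.mul_apply, Fin.sum_univ_two]
  refine le_trans (Polynomial.degree_add_le _ _) (max_le ?_ ?_) <;>
    exact le_trans (Polynomial.degree_mul_le _ _) (add_le_add (hA _ _) (hB _ _))

/-- The core induction: the product of the polynomial matrices along a reduced word
has an explicit leading term of degree `2 * length` with nonzero coefficient. -/
lemma core_induction (x y : Fin d → F)
    (hpair : ∀ ℓ ℓ' : Fin d × Bool, ℓ' ≠ (ℓ.1, !ℓ.2) → Vvec x y ℓ ⬝ᵥ Uvec x y ℓ' ≠ 0) :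
    ∀ (L : List (Fin d × Bool)) (ℓ : Fin d × Bool),
      (ℓ :: L).Chain' (fun a b => b ≠ (a.1, !a.2)) →
      ∃ c : F, c ≠ 0 ∧ ∃ E : Matrix (Fin 2) (Fin 2) F[X],
        (∀ i j, (E i j).degree ≤ ((2 * L.length + 1 : ℕ) : WithBot ℕ)) ∧
        ((ℓ :: L).map (Mp x y)).prod
          = (C c * X ^ (2 * (L.length + 1))) •
              vecMulVec (UC x y ℓ) (VC x y ((ℓ :: L).getLast (List.cons_ne_nil _ _))) + E := by
  intro L
  induction L with
  | nil =>
    intro ℓ _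
    refine ⟨1, one_ne_zero, (Bmat x y (ℓ.1, !ℓ.2)).map C, ?_, ?_⟩
    · intro i j
      have h0 : (((Bmat x y (ℓ.1, !ℓ.2)).map C) i j).degree ≤ 0 := by
        simpa [Matrix.map_apply] using Polynomial.degree_C_le
      refine h0.trans ?_
      simp only [List.length_nil]
      exact_mod_cast (by omega : (0:ℕ) ≤ 2 * 0 + 1)
    · simp only [List.map_cons, List.map_nil, List.prod_cons, List.prod_nil, mul_one,
        List.getLast_singleton, List.length_nil]
      rw [Mp, Bmat, map_C_vecMulVec]
      norm_num
  | cons ℓ' L'' ih =>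
    intro ℓ hchain
    have hrel : ℓ' ≠ (ℓ.1, !ℓ.2) := (List.isChain_cons_cons.1 hchain).1
    have hchain' : (ℓ' :: L'').Chain' (fun a b => b ≠ (a.1, !a.2)) := (List.isChain_cons_cons.1 hchain).2
    obtain ⟨c', hc', E', hE', heq⟩ := ih ℓ' hchain'
    have hgetLast : (ℓ :: ℓ' :: L'').getLast (List.cons_ne_nil _ _)
        = (ℓ' :: L'').getLast (List.cons_ne_nil _ _) := List.getLast_cons _
    have hprod : ((ℓ :: ℓ' :: L'').map (Mp x y)).prod
        = Mp x y ℓ * ((ℓ' :: L'').map (Mp x y)).prod := by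
      simp [List.map_cons, List.prod_cons]
    have hprne : Vvec x y ℓ ⬝ᵥ Uvec x y ℓ' ≠ 0 := hpair _ _ hrel
    -- names
    set n := L''.length with hn
    refine ⟨c' * (Vvec x y ℓ ⬝ᵥ Uvec x y ℓ'), mul_ne_zero hc' hprne,
      (Bmat x y (ℓ.1, !ℓ.2)).map C *
          ((C c' * X ^ (2 * (n + 1))) •
            vecMulVec (UC x y ℓ') (VC x y ((ℓ' :: L'').getLast (List.cons_ne_nil _ _))))
        + ((X ^ 2 : F[X]) • (Bmat x y ℓ).map C) * E'
        + (Bmat x y (ℓ.1, !ℓ.2)).map C * E', ?_, ?_⟩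
    · -- degree bounds
      have hAdeg : ∀ i j, (((Bmat x y ℓ).map C) i j).degree ≤ (0 : WithBot ℕ) := by
        intro i j; simpa [Matrix.map_apply] using Polynomial.degree_C_le
      have hAfdeg : ∀ i j, (((Bmat x y (ℓ.1, !ℓ.2)).map C) i j).degree ≤ (0 : WithBot ℕ) := by
        intro i j; simpa [Matrix.map_apply] using Polynomial.degree_C_le
      have hXAdeg : ∀ i j, ((((X ^ 2 : F[X]) • (Bmat x y ℓ).map C)) i j).degree
          ≤ ((2 : ℕ) : WithBot ℕ) := by
        intro i j
        rw [Matrix.smul_apply, smul_eq_mul]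
        refine le_trans (Polynomial.degree_mul_le _ _) ?_
        calc (X ^ 2 : F[X]).degree + (((Bmat x y ℓ).map C) i j).degree
            ≤ ((2:ℕ) : WithBot ℕ) + 0 := by
              exact add_le_add (by simp [Polynomial.degree_X_pow]) (hAdeg i j)
          _ = ((2 : ℕ) : WithBot ℕ) := by norm_num
      have hsW'deg : ∀ i j,
          (((C c' * X ^ (2 * (n + 1))) •
            vecMulVec (UC x y ℓ') (VC x y ((ℓ' :: L'').getLast (List.cons_ne_nil _ _)))) i j).degree
          ≤ ((2 * (n + 1) : ℕ) : WithBot ℕ) := by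
        intro i j
        rw [Matrix.smul_apply, smul_eq_mul]
        refine le_trans (Polynomial.degree_mul_le _ _) ?_
        have h1 : (C c' * X ^ (2 * (n + 1)) : F[X]).degree ≤ ((2 * (n + 1) : ℕ) : WithBot ℕ) := by
          refine le_trans (Polynomial.degree_mul_le _ _) ?_
          calc (C c').degree + (X ^ (2 * (n + 1)) : F[X]).degree
              ≤ 0 + ((2 * (n + 1) : ℕ) : WithBot ℕ) := by
                exact add_le_add Polynomial.degree_C_le (by simp [Polynomial.degree_X_pow])
            _ = ((2 * (n + 1) : ℕ) : WithBot ℕ) := by norm_num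
        have h2 := UC_deg x y ℓ' (ℓ' := (ℓ' :: L'').getLast (List.cons_ne_nil _ _)) i j
        calc (C c' * X ^ (2 * (n + 1)) : F[X]).degree
              + ((vecMulVec (UC x y ℓ') (VC x y ((ℓ' :: L'').getLast (List.cons_ne_nil _ _)))) i j).degree
            ≤ ((2 * (n + 1) : ℕ) : WithBot ℕ) + 0 := add_le_add h1 h2
          _ = ((2 * (n + 1) : ℕ) : WithBot ℕ) := by norm_num
      intro i j
      rw [Matrix.add_apply, Matrix.add_apply]
      simp only [List.length_cons, ← hn]
      refine le_trans (Polynomial.degree_add_le _ _)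
        (max_le (le_trans (Polynomial.degree_add_le _ _) (max_le ?_ ?_)) ?_)
      · refine le_trans (deg_mul_le _ _ 0 ((2 * (n + 1) : ℕ) : WithBot ℕ) hAfdeg hsW'deg i j) ?_
        rw [zero_add]
        exact_mod_cast (by omega : 2 * (n + 1) ≤ 2 * (n + 1) + 1)
      · refine le_trans (deg_mul_le _ E' ((2:ℕ) : WithBot ℕ) ((2 * n + 1 : ℕ) : WithBot ℕ)
          hXAdeg hE' i j) ?_
        exact_mod_cast (by omega : 2 + (2 * n + 1) ≤ 2 * (n + 1) + 1)
      · refine le_trans (deg_mul_le _ E' 0 ((2 * n + 1 : ℕ) : WithBot ℕ) hAfdeg hE' i j) ?_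
        rw [zero_add]
        exact_mod_cast (by omega : 2 * n + 1 ≤ 2 * (n + 1) + 1)
    · -- the product identity
      rw [hprod, heq]
      have hAW' : (Bmat x y ℓ).map C *
          vecMulVec (UC x y ℓ') (VC x y ((ℓ' :: L'').getLast (List.cons_ne_nil _ _)))
          = C (Vvec x y ℓ ⬝ᵥ Uvec x y ℓ') •
            vecMulVec (UC x y ℓ) (VC x y ((ℓ' :: L'').getLast (List.cons_ne_nil _ _))) := by
        rw [Bmat, map_C_vecMulVec, _root_.vecMulVec_mul_vecMulVec, dot_C]
      have hlead : ((X ^ 2 : F[X]) • (Bmat x y ℓ).map C) *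
            ((C c' * X ^ (2 * (n + 1))) •
              vecMulVec (UC x y ℓ') (VC x y ((ℓ' :: L'').getLast (List.cons_ne_nil _ _))))
          = (C (c' * (Vvec x y ℓ ⬝ᵥ Uvec x y ℓ')) * X ^ (2 * ((ℓ' :: L'').length + 1))) •
              vecMulVec (UC x y ℓ) (VC x y ((ℓ' :: L'').getLast (List.cons_ne_nil _ _))) := by
        rw [smul_mul_assoc, mul_smul_comm, hAW', smul_smul, smul_smul]
        congr 1
        rw [Polynomial.C_mul]
        simp only [List.length_cons, ← hn]
        ring
      rw [Mp]
      calc ((X ^ 2 : F[X]) • (Bmat x y ℓ).map C + (Bmat x y (ℓ.1, !ℓ.2)).map C) *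
            ((C c' * X ^ (2 * (n + 1))) •
              vecMulVec (UC x y ℓ') (VC x y ((ℓ' :: L'').getLast (List.cons_ne_nil _ _))) + E')
          = ((X ^ 2 : F[X]) • (Bmat x y ℓ).map C) *
              ((C c' * X ^ (2 * (n + 1))) •
                vecMulVec (UC x y ℓ') (VC x y ((ℓ' :: L'').getLast (List.cons_ne_nil _ _)))) +
            ((Bmat x y (ℓ.1, !ℓ.2)).map C *
                ((C c' * X ^ (2 * (n + 1))) •
                  vecMulVec (UC x y ℓ') (VC x y ((ℓ' :: L'').getLast (List.cons_ne_nil _ _))))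
              + ((X ^ 2 : F[X]) • (Bmat x y ℓ).map C) * E'
              + (Bmat x y (ℓ.1, !ℓ.2)).map C * E') := by
            simp only [add_mul, mul_add]; abel
        _ = _ := by rw [hlead, hgetLast]
end Core

section Existence
variable {d : ℕ}

lemma pair_ne (x y : Fin d → F) (hx : Function.Injective x) (hy : Function.Injective y)
    (hxy : ∀ i j, x i ≠ y j) (ℓ ℓ' : Fin d × Bool) (h : ℓ' ≠ (ℓ.1, !ℓ.2)) :
    Vvec x y ℓ ⬝ᵥ Uvec x y ℓ' ≠ 0 := by
  obtain ⟨i, b⟩ := ℓ; obtain ⟨i', b'⟩ := ℓ'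
  cases b <;> cases b' <;>
    simp only [Uvec, Vvec, dotProduct, Fin.sum_univ_two, Bool.not_false, Bool.not_true,
      if_true, if_false, Bool.false_eq_true, Bool.true_eq_false,
      Matrix.cons_val_zero, Matrix.cons_val_one, Matrix.head_cons, ne_eq, Prod.mk.injEq] at h ⊢
  · -- b = ff, b' = ff : -1 * y i' + x i * 1 ≠ 0
    intro hc
    exact hxy i i' (by linear_combination hc)
  · -- b = ff, b' = tt
    intro hc
    have hii : i' = i := hx (by linear_combination -hc)
    subst hii
    simp at h
  · -- b = tt, b' = ff
    intro hc
    have hii : i' = i := hy (by linear_combination hc)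
    subst hii
    simp at h
  · -- b = tt, b' = tt
    intro hc
    exact hxy i' i (by linear_combination hc)

lemma prod_map_smul {ι : Type*} (L : List ι) (f : ι → F) (g : ι → Matrix (Fin 2) (Fin 2) F) :
    (L.map fun i => f i • g i).prod = (L.map f).prod • (L.map g).prod := by
  induction L with
  | nil => simp
  | cons a l ih =>
    rw [List.map_cons, List.map_cons, List.map_cons, List.prod_cons, List.prod_cons,
      List.prod_cons, ih, smul_mul_smul_comm]

lemma exists_nonscalar [Infinite F] (w : FreeGroup (Fin d)) (hw : w ≠ 1) :
    ∃ u ∈ wordValues w (Matrix.SpecialLinearGroup (Fin 2) F),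
      ((u : Matrix (Fin 2) (Fin 2) F)) 1 0 ≠ 0 := by
  classical
  set e := Infinite.natEmbedding F with he
  set x : Fin d → F := fun i => e (2 * i.val) with hxdef
  set y : Fin d → F := fun i => e (2 * i.val + 1) with hydef
  have hx : Function.Injective x := fun i j hij => Fin.ext (by
    have := e.injective hij; omega)
  have hy : Function.Injective y := fun i j hij => Fin.ext (by
    have := e.injective hij; omega)
  have hxy : ∀ i j, x i ≠ y j := fun i j hij => by
    have := e.injective hij; omega
  have hδ : ∀ i : Fin d, x i - y i ≠ 0 := fun i => sub_ne_zero.2 (hxy i i)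
  have hpair := pair_ne x y hx hy hxy
  obtain ⟨ℓ, L', hLw⟩ : ∃ ℓ L', w.toWord = ℓ :: L' := by
    cases hL : w.toWord with
    | nil => exact absurd (FreeGroup.toWord_eq_nil_iff.1 hL) hw
    | cons a l => exact ⟨a, l, rfl⟩
  have hchain : (ℓ :: L').Chain' (fun a b => b ≠ (a.1, !a.2)) := hLw ▸ toWord_chain' w
  obtain ⟨c, hc, E, hE, heq⟩ := core_induction x y hpair L' ℓ hchain
  -- the (1,0) entry of the polynomial product is nonzero
  set q : F[X] := (((ℓ :: L').map (Mp x y)).prod) 1 0 with hqdef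
  set lst := (ℓ :: L').getLast (List.cons_ne_nil _ _) with hlst
  have hU1 : Uvec x y ℓ 1 = 1 := by
    rcases ℓ with ⟨i, b⟩; cases b <;> simp [Uvec]
  have hV0 : Vvec x y lst 0 = 1 ∨ Vvec x y lst 0 = -1 := by
    rcases lst with ⟨i, b⟩; cases b <;> simp [Vvec]
  have hV0ne : Vvec x y lst 0 ≠ 0 := by
    rcases hV0 with h | h <;> rw [h] <;> simp
  have hqentry : q = (C c * X ^ (2 * (L'.length + 1))) * C (Vvec x y lst 0) + E 1 0 := by
    rw [hqdef, heq]
    rw [Matrix.add_apply, Matrix.smul_apply, Matrix.vecMulVec_apply, smul_eq_mul]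
    congr 1
    rw [UC, VC]
    simp [hU1]
  have hcoeff : q.coeff (2 * (L'.length + 1)) = c * Vvec x y lst 0 := by
    rw [hqentry]
    have h1 : (C c * X ^ (2 * (L'.length + 1))) * C (Vvec x y lst 0)
        = C (c * Vvec x y lst 0) * X ^ (2 * (L'.length + 1)) := by
      rw [Polynomial.C_mul]; ring
    rw [h1, Polynomial.coeff_add, Polynomial.coeff_C_mul, Polynomial.coeff_X_pow,
      if_pos rfl, mul_one, Polynomial.coeff_eq_zero_of_degree_lt, add_zero]
    refine lt_of_le_of_lt (hE 1 0) ?_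
    exact_mod_cast (by omega : 2 * L'.length + 1 < 2 * (L'.length + 1))
  have hqne : q ≠ 0 := fun h0 => by
    rw [h0, Polynomial.coeff_zero] at hcoeff
    exact mul_ne_zero hc hV0ne hcoeff.symm
  -- choose a good specialization point α
  have hXq : (X : F[X]) * q ≠ 0 := mul_ne_zero Polynomial.X_ne_zero hqne
  obtain ⟨α, hα⟩ : ∃ α : F, ¬ ((X : F[X]) * q).IsRoot α := by
    obtain ⟨α, hα⟩ := (Polynomial.finite_setOf_isRoot hXq).infinite_compl.nonempty
    exact ⟨α, hα⟩
  rw [Polynomial.IsRoot, Polynomial.eval_mul, Polynomial.eval_X] at hα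
  obtain ⟨hα0, hqα⟩ := mul_ne_zero_iff.1 hα
  -- matrices over F
  set matg : Fin d × Bool → Matrix (Fin 2) (Fin 2) F := fun z =>
    ((x z.1 - y z.1)⁻¹ * α⁻¹) • (α ^ 2 • Bmat x y z + Bmat x y (z.1, !z.2)) with hmatg
  have hdetg : ∀ z, (matg z).det = 1 := by
    intro z
    have hδz : x z.1 - y z.1 ≠ 0 := hδ z.1
    rcases z with ⟨i, b⟩
    cases b <;>
      · simp only [hmatg, Bmat, Uvec, Vvec, Bool.not_false, Bool.not_true, if_true, if_false,
          Bool.false_eq_true, Bool.true_eq_false, Matrix.det_fin_two, Matrix.smul_apply,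
          Matrix.add_apply, Matrix.vecMulVec_apply, Matrix.cons_val_zero, Matrix.cons_val_one,
          Matrix.head_cons, smul_eq_mul]
        field_simp
        ring
  have hprodinv : ∀ i : Fin d, matg (i, true) * matg (i, false) = 1 := by
    intro i
    have hδz : x i - y i ≠ 0 := hδ i
    ext r s
    fin_cases r <;> fin_cases s <;>
      · simp only [hmatg, Bmat, Uvec, Vvec, Bool.not_false, Bool.not_true, if_true, if_false,
          Bool.false_eq_true, Bool.true_eq_false, Matrix.mul_apply, Fin.sum_univ_two,
          Matrix.smul_apply, Matrix.add_apply, Matrix.vecMulVec_apply, Matrix.cons_val_zero,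
          Matrix.cons_val_one, Matrix.head_cons, smul_eq_mul, Matrix.one_apply, Fin.zero_eta,
            Fin.mk_one, Fin.reduceEq, ↓reduceIte]
        field_simp
        ring
  set gSL : Fin d → Matrix.SpecialLinearGroup (Fin 2) F := fun i => ⟨matg (i, true), hdetg _⟩
    with hgSL
  have hginv : ∀ i, (gSL i)⁻¹ = (⟨matg (i, false), hdetg _⟩ : Matrix.SpecialLinearGroup (Fin 2) F) := by
    intro i
    refine inv_eq_of_mul_eq_one_right (Subtype.ext ?_)
    show matg (i, true) * matg (i, false) = _
    rw [hprodinv i, Matrix.SpecialLinearGroup.coe_one]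
  have hcoe : ((FreeGroup.lift gSL w : Matrix.SpecialLinearGroup (Fin 2) F) : Matrix (Fin 2) (Fin 2) F)
      = ((ℓ :: L').map matg).prod := by
    have h1 : FreeGroup.lift gSL w = FreeGroup.lift gSL (FreeGroup.mk (ℓ :: L')) := by
      rw [← hLw, FreeGroup.mk_toWord]
    rw [h1, FreeGroup.lift_mk, ← toMat_apply, map_list_prod, List.map_map]
    congr 1
    refine List.map_congr_left ?_
    rintro ⟨i, b⟩ _
    cases b
    · show toMat ((gSL i)⁻¹) = matg (i, false)
      rw [hginv i]; rfl
    · show toMat (gSL i) = matg (i, true)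
      rw [toMat_apply]
  -- evaluation of the polynomial product
  have hletter : ∀ z : Fin d × Bool,
      (Mp x y z).map (Polynomial.eval α) = ((x z.1 - y z.1) * α) • matg z := by
    intro z
    have hδz : x z.1 - y z.1 ≠ 0 := hδ z.1
    ext r s
    simp only [Mp, hmatg, Matrix.map_apply, Matrix.add_apply, Matrix.smul_apply,
      Matrix.map_apply, smul_eq_mul, Polynomial.eval_add, Polynomial.eval_mul,
      Polynomial.eval_pow, Polynomial.eval_X, Polynomial.eval_C]
    try field_simp
    try ring
  have hevalprod : (((ℓ :: L').map (Mp x y)).prod).map (Polynomial.eval α)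
      = ((ℓ :: L').map (fun z => ((x z.1 - y z.1) * α) • matg z)).prod := by
    have := map_list_prod ((Polynomial.evalRingHom α).mapMatrix) ((ℓ :: L').map (Mp x y))
    have h2 : ∀ M : Matrix (Fin 2) (Fin 2) F[X],
        (Polynomial.evalRingHom α).mapMatrix M = M.map (Polynomial.eval α) := fun M => rfl
    rw [← h2, this, List.map_map]
    congr 1
    refine List.map_congr_left ?_
    intro z _
    show (Polynomial.evalRingHom α).mapMatrix (Mp x y z) = _
    rw [h2, hletter z]
  set Δ : F := ((ℓ :: L').map (fun z => (x z.1 - y z.1) * α)).prod with hΔdef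
  have hΔ : Δ ≠ 0 := by
    rw [hΔdef]
    refine List.prod_ne_zero ?_
    intro h0mem
    obtain ⟨z, _, hz⟩ := List.mem_map.1 h0mem
    exact mul_ne_zero (hδ z.1) hα0 hz
  have hqeval : Polynomial.eval α q
      = Δ * (((FreeGroup.lift gSL w : Matrix.SpecialLinearGroup (Fin 2) F) : Matrix (Fin 2) (Fin 2) F) 1 0) := by
    have h3 : Polynomial.eval α q = ((((ℓ :: L').map (Mp x y)).prod).map (Polynomial.eval α)) 1 0 := by
      rw [hqdef, Matrix.map_apply]
    rw [h3, hevalprod, prod_map_smul, hcoe, ← hΔdef, Matrix.smul_apply, smul_eq_mul]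
  refine ⟨FreeGroup.lift gSL w, ⟨gSL, rfl⟩, ?_⟩
  intro h0
  rw [h0, mul_zero] at hqeval
  exact hqα hqeval

end Existence

/-- Conjugating a word value onto any nonscalar matrix with the same trace and determinant 1. -/
lemma conj_wordValue_to {d : ℕ} (w : FreeGroup (Fin d))
    (u : Matrix.SpecialLinearGroup (Fin 2) F)
    (hu : u ∈ wordValues w (Matrix.SpecialLinearGroup (Fin 2) F))
    (huns : (u : Matrix (Fin 2) (Fin 2) F) 1 0 ≠ 0 ∨ (u : Matrix (Fin 2) (Fin 2) F) 0 1 ≠ 0 ∨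
      (u : Matrix (Fin 2) (Fin 2) F) 0 0 ≠ (u : Matrix (Fin 2) (Fin 2) F) 1 1)
    (N : Matrix (Fin 2) (Fin 2) F) (hNdet : N.det = 1)
    (hNns : N 1 0 ≠ 0 ∨ N 0 1 ≠ 0 ∨ N 0 0 ≠ N 1 1)
    (htr : N 0 0 + N 1 1 = (u : Matrix (Fin 2) (Fin 2) F) 0 0 + (u : Matrix (Fin 2) (Fin 2) F) 1 1) :
    ∃ u' ∈ wordValues w (Matrix.SpecialLinearGroup (Fin 2) F),
      (u' : Matrix (Fin 2) (Fin 2) F) = N := by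
  obtain ⟨P₁, hP₁, h₁⟩ := mul_companion ((u : Matrix (Fin 2) (Fin 2) F)) u.prop huns
  obtain ⟨P₂, hP₂, h₂⟩ := mul_companion N hNdet hNns
  rw [htr] at h₂
  have hP₁u : IsUnit P₁.det := isUnit_iff_ne_zero.2 hP₁
  have hP₂u : IsUnit P₂.det := isUnit_iff_ne_zero.2 hP₂
  have hQQ' : (P₂ * P₁⁻¹) * (P₁ * P₂⁻¹) = 1 := by
    rw [mul_assoc, ← mul_assoc P₁⁻¹, Matrix.nonsing_inv_mul _ hP₁u, one_mul,
      Matrix.mul_nonsing_inv _ hP₂u]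
  have hQ'Q : (P₁ * P₂⁻¹) * (P₂ * P₁⁻¹) = 1 := by
    rw [mul_assoc, ← mul_assoc P₂⁻¹, Matrix.nonsing_inv_mul _ hP₂u, one_mul,
      Matrix.mul_nonsing_inv _ hP₁u]
  obtain ⟨u', hu', hcoe⟩ := conj_mem_wordValues w u hu _ _ hQQ' hQ'Q
  refine ⟨u', hu', ?_⟩
  rw [hcoe]
  have e1 : P₁⁻¹ * (u : Matrix (Fin 2) (Fin 2) F)
      = !![0, -1; 1, (u : Matrix (Fin 2) (Fin 2) F) 0 0 + (u : Matrix (Fin 2) (Fin 2) F) 1 1] * P₁⁻¹ := by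
    calc P₁⁻¹ * (u : Matrix (Fin 2) (Fin 2) F)
        = P₁⁻¹ * (u : Matrix (Fin 2) (Fin 2) F) * (P₁ * P₁⁻¹) := by
          rw [Matrix.mul_nonsing_inv _ hP₁u, mul_one]
      _ = P₁⁻¹ * ((u : Matrix (Fin 2) (Fin 2) F) * P₁) * P₁⁻¹ := by simp only [mul_assoc]
      _ = P₁⁻¹ * (P₁ * !![0, -1; 1, (u : Matrix (Fin 2) (Fin 2) F) 0 0 + (u : Matrix (Fin 2) (Fin 2) F) 1 1]) * P₁⁻¹ := by
          rw [h₁]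
      _ = (P₁⁻¹ * P₁) * (!![0, -1; 1, (u : Matrix (Fin 2) (Fin 2) F) 0 0 + (u : Matrix (Fin 2) (Fin 2) F) 1 1] * P₁⁻¹) := by
          simp only [mul_assoc]
      _ = _ := by rw [Matrix.nonsing_inv_mul _ hP₁u, one_mul]
  calc (P₂ * P₁⁻¹) * (u : Matrix (Fin 2) (Fin 2) F) * (P₁ * P₂⁻¹)
      = P₂ * ((P₁⁻¹ * (u : Matrix (Fin 2) (Fin 2) F)) * P₁) * P₂⁻¹ := by
        simp only [mul_assoc]
    _ = P₂ * (!![0, -1; 1, (u : Matrix (Fin 2) (Fin 2) F) 0 0 + (u : Matrix (Fin 2) (Fin 2) F) 1 1]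
          * (P₁⁻¹ * P₁)) * P₂⁻¹ := by rw [e1]; simp only [mul_assoc]
    _ = (N * P₂) * P₂⁻¹ := by
        rw [Matrix.nonsing_inv_mul _ hP₁u, mul_one, ← h₂]
    _ = N := by rw [mul_assoc, Matrix.mul_nonsing_inv _ hP₂u, mul_one]

end Aux

/-- If `F` is an infinite field and `w₁, w₂` are nontrivial words, then there are infinitely many
`λ ≠ 0` in `F` with `diag(λ, λ⁻¹) ∈ w₁(SL₂(F)) · w₂(SL₂(F))`. -/
theorem diag_in_word_product_infinite {F : Type*} [Field F] [Infinite F]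
    {d₁ d₂ : ℕ} (w₁ : FreeGroup (Fin d₁)) (w₂ : FreeGroup (Fin d₂))
    (hw₁ : w₁ ≠ 1) (hw₂ : w₂ ≠ 1) :
    {l : F | l ≠ 0 ∧
      ∃ g₁ ∈ wordValues w₁ (Matrix.SpecialLinearGroup (Fin 2) F),
        ∃ g₂ ∈ wordValues w₂ (Matrix.SpecialLinearGroup (Fin 2) F),
          ((g₁ * g₂ : Matrix.SpecialLinearGroup (Fin 2) F) : Matrix (Fin 2) (Fin 2) F) =
            Matrix.diagonal ![l, l⁻¹]}.Infinite := by
  obtain ⟨u, hu, hu10⟩ := exists_nonscalar (F := F) w₁ hw₁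
  obtain ⟨v, hv, hv10⟩ := exists_nonscalar (F := F) w₂ hw₂
  have hsub : {l : F | l ≠ 0 ∧ l * l ≠ 1} ⊆ {l : F | l ≠ 0 ∧
      ∃ g₁ ∈ wordValues w₁ (Matrix.SpecialLinearGroup (Fin 2) F),
        ∃ g₂ ∈ wordValues w₂ (Matrix.SpecialLinearGroup (Fin 2) F),
          ((g₁ * g₂ : Matrix.SpecialLinearGroup (Fin 2) F) : Matrix (Fin 2) (Fin 2) F) =
            Matrix.diagonal ![l, l⁻¹]} := by
    rintro l ⟨hl0, hl1⟩
    have hδ : l - l⁻¹ ≠ 0 := by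
      intro h
      apply hl1
      have hli : l = l⁻¹ := sub_eq_zero.1 h
      calc l * l = l * l⁻¹ := by rw [← hli]
        _ = 1 := mul_inv_cancel₀ hl0
    have hll : l * l⁻¹ = 1 := mul_inv_cancel₀ hl0
    set a : F := (u : Matrix (Fin 2) (Fin 2) F) 0 0 + (u : Matrix (Fin 2) (Fin 2) F) 1 1 with ha
    set b : F := (v : Matrix (Fin 2) (Fin 2) F) 0 0 + (v : Matrix (Fin 2) (Fin 2) F) 1 1 with hb
    set sv : F := (b - a * l⁻¹) / (l - l⁻¹) with hsv
    have hsδ : sv * (l - l⁻¹) = b - a * l⁻¹ := div_mul_cancel₀ _ hδ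
    set N₁ : Matrix (Fin 2) (Fin 2) F := !![a - sv, (a - sv) * sv - 1; 1, sv] with hN₁
    set N₂ : Matrix (Fin 2) (Fin 2) F :=
      !![sv * l, -((a - sv) * sv - 1) * l⁻¹; -l, (a - sv) * l⁻¹] with hN₂
    have hN₁det : N₁.det = 1 := by rw [hN₁, Matrix.det_fin_two_of]; ring
    have hN₂det : N₂.det = 1 := by
      rw [hN₂, Matrix.det_fin_two_of]; linear_combination hll
    have hN₁tr : N₁ 0 0 + N₁ 1 1 = a := by
      rw [hN₁]; simp
    have hN₂tr : N₂ 0 0 + N₂ 1 1 = b := by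
      rw [hN₂]; simp; linear_combination hsδ
    obtain ⟨g₁, hg₁, hg₁coe⟩ := conj_wordValue_to w₁ u hu (Or.inl hu10) N₁ hN₁det
      (Or.inl (by rw [hN₁]; norm_num)) (by rw [hN₁tr])
    obtain ⟨g₂, hg₂, hg₂coe⟩ := conj_wordValue_to w₂ v hv (Or.inl hv10) N₂ hN₂det
      (Or.inl (by rw [hN₂]; simp [hl0])) (by rw [hN₂tr])
    refine ⟨hl0, g₁, hg₁, g₂, hg₂, ?_⟩
    rw [Matrix.SpecialLinearGroup.coe_mul, hg₁coe, hg₂coe, hN₁, hN₂]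
    ext i j
    fin_cases i <;> fin_cases j <;>
      simp [Matrix.mul_apply, Fin.sum_univ_two, Matrix.diagonal] <;> ring
  have hfin : {l : F | l = 0 ∨ l * l = 1}.Finite := by
    have hpne : ((X ^ 3 - X : F[X])) ≠ 0 := by
      intro h
      have h3 := congrArg (fun p => Polynomial.coeff p 3) h
      simp [Polynomial.coeff_X_pow, Polynomial.coeff_X] at h3
    refine Set.Finite.subset (Polynomial.finite_setOf_isRoot hpne) ?_
    rintro l (rfl | h1)
    · simp [Polynomial.IsRoot]
    · show Polynomial.IsRoot _ l
      rw [Polynomial.IsRoot]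
      simp only [Polynomial.eval_sub, Polynomial.eval_pow, Polynomial.eval_X]
      linear_combination l * h1
  have hset : {l : F | l ≠ 0 ∧ l * l ≠ 1} = {l : F | l = 0 ∨ l * l = 1}ᶜ := by
    ext l; simp [not_or]
  refine Set.Infinite.mono hsub ?_
  rw [hset]
  exact hfin.infinite_compl
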